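/- Let X be a compact Hausdorff space, H a complex Hilbert space, and n a natural number. Let F : C(X, ℂ) → B(H) be a (not necessarily unital) star-algebra homomorphism such that for every f ∈ C(X, ℂ) the range of F(f) is contained in a subspace of H of dimension at most n. Then there exist k ≤ n, distinct points x₁, …, x_k ∈ X, and nonzero finite-rank orthogonal projections P₁, …, P_k on H with PᵢPⱼ = 0 for i ≠ j and rank P₁ + ⋯ + rank P_k ≤ n, such that F(f) = Σᵢ f(xᵢ) • Pᵢ for every f ∈ C(X, ℂ). -/

import Mathlib

open Module Submodule in
lemma aux_finrank_sum {H : Type*} [NormedAddCommGroup H] [InnerProductSpace ℂ H] :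
    ∀ (m : ℕ) (W : Fin m → Submodule ℂ H) (V : Submodule ℂ H), FiniteDimensional ℂ V →
    (∀ i, W i ≤ V) →
    (∀ i j, i ≠ j → ∀ u ∈ W i, ∀ v ∈ W j, (inner ℂ u v : ℂ) = 0) →
    ∑ i, Module.finrank ℂ (W i) ≤ Module.finrank ℂ V := by
  intro m
  induction m with
  | zero => intro W V _ _ _; simp
  | succ m ih =>
    intro W V hV hle horth
    set V' : Submodule ℂ H := V ⊓ (W 0)ᗮ with hV'def
    haveI : FiniteDimensional ℂ V := hV
    haveI hV'fd : FiniteDimensional ℂ V' := Submodule.finiteDimensional_of_le inf_le_left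
    haveI : FiniteDimensional ℂ (W 0) := Submodule.finiteDimensional_of_le (hle 0)
    have hWle : ∀ i : Fin m, W i.succ ≤ V' := by
      intro i
      refine le_inf (hle _) ?_
      intro u hu
      rw [Submodule.mem_orthogonal]
      intro w hw
      exact horth 0 i.succ (Fin.succ_ne_zero i).symm w hw u hu
    have hrec := ih (fun i => W i.succ) V' hV'fd hWle
      (fun i j hij => horth i.succ j.succ (by simpa using hij))
    have hdisj : Disjoint (W 0) V' :=
      ((W 0).orthogonal_disjoint.mono_right inf_le_right)
    have hsup : W 0 ⊔ V' ≤ V := sup_le (hle 0) inf_le_left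
    have heq := Submodule.finrank_sup_add_finrank_inf_eq (W 0) V'
    rw [hdisj.eq_bot, finrank_bot, add_zero] at heq
    calc ∑ i : Fin (m+1), finrank ℂ (W i)
        = finrank ℂ (W 0) + ∑ i : Fin m, finrank ℂ (W i.succ) := Fin.sum_univ_succ _
      _ ≤ finrank ℂ (W 0) + finrank ℂ V' := Nat.add_le_add_left hrec _
      _ = finrank ℂ ↑(W 0 ⊔ V') := heq.symm
      _ ≤ finrank ℂ V := Submodule.finrank_mono hsup


lemma aux_bump {X : Type*} [TopologicalSpace X] [CompactSpace X] [T2Space X]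
    {m : ℕ} (x : Fin m → X) (hx : Function.Injective x) :
    ∃ G : Fin m → C(X, ℂ),
      (∀ i, star (G i) = G i) ∧ (∀ i, G i (x i) = 1) ∧
      (∀ i j, i ≠ j → G i (x j) = 0) ∧ (∀ i j, i ≠ j → G i * G j = 0) := by
  classical
  -- pairwise disjoint open neighborhoods
  have hsep : ∀ i : Fin m, ∃ U V : Set X, IsOpen U ∧ IsOpen V ∧ x i ∈ U ∧
      (∀ j, j ≠ i → x j ∈ V) ∧ Disjoint U V := by
    intro i
    have hnotmem : x i ∉ (Finset.univ.erase i).image x := by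
      simp only [Finset.mem_image, Finset.mem_erase]
      rintro ⟨j, ⟨hj, -⟩, hje⟩
      exact hj (hx hje)
    obtain ⟨U, V, hU, hV, hxU, hsV, hUV⟩ := SeparatedNhds.of_singleton_finset hnotmem
    exact ⟨U, V, hU, hV, hxU rfl, fun j hj => hsV (by
      simp only [Finset.coe_image, Set.mem_image]
      exact ⟨j, by simp [hj], rfl⟩), hUV⟩
  choose U V hUo hVo hxU hxV hUV using hsep
  set W : Fin m → Set X := fun i => U i ∩ ⋂ (j) (_ : j ≠ i), V j with hWdef
  have hWo : ∀ i, IsOpen (W i) := fun i =>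
    (hUo i).inter (isOpen_iInter_of_finite fun j => isOpen_iInter_of_finite fun _ => hVo j)
  have hxW : ∀ i, x i ∈ W i := by
    intro i
    refine ⟨hxU i, ?_⟩
    simp only [Set.mem_iInter]
    intro j hj
    exact hxV j i (fun h => hj h.symm)
  have hWdisj : ∀ i j, i ≠ j → Disjoint (W i) (W j) := by
    intro i j hij
    have h1 : W i ≤ V j := by
      intro y hy
      exact Set.mem_iInter.mp (Set.mem_iInter.mp hy.2 j) hij.symm
    have h2 : W j ≤ U j := Set.inter_subset_left
    exact ((hUV j).symm.mono h1 h2).symm.symm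
  have hg : ∀ i : Fin m, ∃ g : C(X, ℝ), Set.EqOn g 0 (W i)ᶜ ∧ g (x i) = 1 := by
    intro i
    obtain ⟨g, hg0, hg1, -⟩ := exists_continuous_zero_one_of_isClosed
      (isClosed_compl_iff.mpr (hWo i)) (isClosed_singleton (x := x i))
      (by
        rw [Set.disjoint_singleton_right]
        exact fun h => h (hxW i))
    exact ⟨g, hg0, hg1 rfl⟩
  choose g hg0 hg1 using hg
  refine ⟨fun i => ⟨fun y => (g i y : ℂ), Complex.continuous_ofReal.comp (g i).continuous⟩,
    ?_, ?_, ?_, ?_⟩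
  · intro i
    ext y
    exact Complex.conj_ofReal _
  · intro i
    simp [hg1 i]
  · intro i j hij
    have : x j ∉ W i := fun h =>
      Set.disjoint_left.mp (hWdisj i j hij) h (hxW j)
    simp [hg0 i this]
  · intro i j hij
    ext y
    simp only [ContinuousMap.mul_apply, ContinuousMap.coe_mk, ContinuousMap.zero_apply]
    by_cases hy : y ∈ W i
    · have : y ∉ W j := Set.disjoint_left.mp (hWdisj i j hij) hy
      rw [hg0 j this]
      simp
    · rw [hg0 i hy]
      simp


/-- A bounded-rank star-algebra homomorphism `F : C(X, ℂ) → B(H)` is a finite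
configuration: there are `k ≤ n` distinct points of `X` labeled by nonzero, mutually orthogonal,
finite-rank orthogonal projections with total rank at most `n`, such that
`F f = ∑ i, f xᵢ • Pᵢ`. -/
theorem stmt0
    {X : Type*} [TopologicalSpace X] [CompactSpace X] [T2Space X]
    {H : Type*} [NormedAddCommGroup H] [InnerProductSpace ℂ H] [CompleteSpace H]
    (n : ℕ)
    (F : C(X, ℂ) →⋆ₙₐ[ℂ] (H →L[ℂ] H))
    (hF : ∀ f : C(X, ℂ), ∃ V : Submodule ℂ H, FiniteDimensional ℂ V ∧
      Module.finrank ℂ V ≤ n ∧ LinearMap.range ((F f) : H →ₗ[ℂ] H) ≤ V) :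
    ∃ k : ℕ, k ≤ n ∧ ∃ (x : Fin k → X) (P : Fin k → (H →L[ℂ] H)),
      Function.Injective x ∧
      (∀ i, P i ≠ 0) ∧
      (∀ i, IsSelfAdjoint (P i)) ∧
      (∀ i, IsIdempotentElem (P i)) ∧
      (∀ i, FiniteDimensional ℂ (LinearMap.range ((P i) : H →ₗ[ℂ] H))) ∧
      (∀ i j, i ≠ j → P i * P j = 0) ∧
      (∑ i, Module.finrank ℂ (LinearMap.range ((P i) : H →ₗ[ℂ] H))) ≤ n ∧
      (∀ f : C(X, ℂ), F f = ∑ i, f (x i) • P i) := by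
  classical
  -- the kernel ideal
  let I : Ideal C(X, ℂ) :=
    { carrier := {f | F f = 0}
      add_mem' := fun hf hg => by
        simp only [Set.mem_setOf_eq, map_add] at *
        rw [hf, hg, add_zero]
      zero_mem' := map_zero F
      smul_mem' := fun c f hf => by
        simp only [Set.mem_setOf_eq, smul_eq_mul, map_mul] at *
        rw [hf, mul_zero] }
  have hImem : ∀ f : C(X, ℂ), f ∈ I ↔ F f = 0 := fun f => Iff.rfl
  have hIclosed : IsClosed (I : Set C(X, ℂ)) := by
    have hcont : Continuous F :=
      AddMonoidHomClass.continuous_of_bound F 1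
        (by simpa using fun f => NonUnitalStarAlgHom.norm_apply_le F f)
    exact isClosed_singleton.preimage hcont
  have hIdeal := ContinuousMap.idealOfSet_ofIdeal_isClosed hIclosed
  set K : Set X := (ContinuousMap.setOfIdeal I)ᶜ with hKdef
  have hvanish : ∀ f : C(X, ℂ), (∀ y ∈ K, f y = 0) → F f = 0 := by
    intro f hf
    have hfI : f ∈ ContinuousMap.idealOfSet ℂ (ContinuousMap.setOfIdeal I) :=
      ContinuousMap.mem_idealOfSet.mpr fun y hy => hf y hy
    rwa [hIdeal, hImem] at hfI
  have hKmem : ∀ y ∈ K, ∀ f ∈ I, f y = 0 := fun y hy =>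
    ContinuousMap.notMem_setOfIdeal.mp hy
  -- the common finite-dimensional subspace
  obtain ⟨V₁, hV₁fd, hV₁rank, hV₁range⟩ := hF 1
  haveI := hV₁fd
  have hrange : ∀ f : C(X, ℂ), LinearMap.range ((F f) : H →ₗ[ℂ] H) ≤ V₁ := by
    intro f
    rintro - ⟨h, rfl⟩
    have h1 : F f = F 1 * F f := by rw [← map_mul, one_mul]
    rw [h1]
    exact hV₁range ⟨F f h, rfl⟩
  -- generic counting/orthogonality for points of K
  have horthQ : ∀ (G₁ G₂ : C(X, ℂ)), star G₁ = G₁ → G₁ * G₂ = 0 →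
      ∀ u ∈ LinearMap.range ((F G₁) : H →ₗ[ℂ] H),
      ∀ v ∈ LinearMap.range ((F G₂) : H →ₗ[ℂ] H), (inner ℂ u v : ℂ) = 0 := by
    rintro G₁ G₂ hstar hmul - ⟨a, rfl⟩ - ⟨b, rfl⟩
    simp only [ContinuousLinearMap.coe_coe]
    have hQQ : ContinuousLinearMap.adjoint (F G₁) * F G₂ = 0 := by
      rw [← ContinuousLinearMap.star_eq_adjoint, ← map_star, ← map_mul, hstar, hmul, map_zero]
    have h2 : (inner ℂ a ((ContinuousLinearMap.adjoint (F G₁)) ((F G₂) b)) : ℂ)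
        = inner ℂ ((F G₁) a) ((F G₂) b) :=
      ContinuousLinearMap.adjoint_inner_right (F G₁) a ((F G₂) b)
    rw [← h2]
    have h3 : (ContinuousLinearMap.adjoint (F G₁)) ((F G₂) b)
        = (ContinuousLinearMap.adjoint (F G₁) * F G₂) b := rfl
    rw [h3, hQQ]
    simp
  have hne : ∀ g : C(X, ℂ), ∀ y ∈ K, g y ≠ 0 → F g ≠ 0 := by
    intro g y hy hgy hFg
    exact hgy (hKmem y hy g ((hImem g).mpr hFg))
  have hrankpos : ∀ Q : H →L[ℂ] H, Q ≠ 0 → LinearMap.range (Q : H →ₗ[ℂ] H) ≤ V₁ →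
      1 ≤ Module.finrank ℂ (LinearMap.range (Q : H →ₗ[ℂ] H)) := by
    intro Q hQ hle
    haveI : FiniteDimensional ℂ (LinearMap.range (Q : H →ₗ[ℂ] H)) :=
      Submodule.finiteDimensional_of_le hle
    rw [Nat.one_le_iff_ne_zero]
    intro h0
    apply hQ
    have hbot : LinearMap.range (Q : H →ₗ[ℂ] H) = ⊥ :=
      Submodule.finrank_eq_zero.mp h0
    ext v
    have : Q v ∈ LinearMap.range (Q : H →ₗ[ℂ] H) := ⟨v, rfl⟩
    rw [hbot] at this
    simpa using this
  have claim : ∀ (m : ℕ) (x : Fin m → X), Function.Injective x → (∀ i, x i ∈ K) → m ≤ n := by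
    intro m x hinj hmem
    obtain ⟨G, hGstar, hG1, hG0, hGmul⟩ := aux_bump x hinj
    have hfd := aux_finrank_sum m (fun i => LinearMap.range ((F (G i)) : H →ₗ[ℂ] H)) V₁ hV₁fd
      (fun i => hrange (G i))
      (fun i j hij => horthQ (G i) (G j) (hGstar i) (hGmul i j hij))
    have hones : ∀ i : Fin m, 1 ≤ Module.finrank ℂ
        (LinearMap.range ((F (G i)) : H →ₗ[ℂ] H)) := by
      intro i
      refine hrankpos _ (hne (G i) (x i) (hmem i) (by rw [hG1 i]; exact one_ne_zero)) (hrange _)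
    calc m = ∑ _i : Fin m, 1 := by simp
      _ ≤ ∑ i, Module.finrank ℂ (LinearMap.range ((F (G i)) : H →ₗ[ℂ] H)) :=
          Finset.sum_le_sum fun i _ => hones i
      _ ≤ Module.finrank ℂ V₁ := hfd
      _ ≤ n := hV₁rank
  -- K is finite
  have hKfin : K.Finite := by
    by_contra hinf
    have hinf' : K.Infinite := hinf
    obtain ⟨t, hts, htc⟩ := hinf'.exists_subset_card_eq (n + 1)
    have e : Fin (n + 1) ≃ ↥t :=
      (Fintype.equivFinOfCardEq (by rw [Fintype.card_coe, htc])).symm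
    have hinj : Function.Injective (fun i => ((e i : X))) :=
      Subtype.coe_injective.comp e.injective
    have := claim (n + 1) (fun i => ((e i : X))) hinj (fun i => hts (e i).2)
    omega
  -- enumerate K
  haveI hKfintype : Fintype ↥K := hKfin.fintype
  set k := Fintype.card ↥K with hk
  have e : Fin k ≃ ↥K := (Fintype.equivFin ↥K).symm
  set x : Fin k → X := fun i => ((e i : X)) with hx
  have hxinj : Function.Injective x := Subtype.coe_injective.comp e.injective
  have hxmem : ∀ i, x i ∈ K := fun i => (e i).2
  have hxsurj : ∀ y ∈ K, ∃ i, x i = y := by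
    intro y hy
    exact ⟨e.symm ⟨y, hy⟩, by simp [hx]⟩
  have hker' : ∀ f : C(X, ℂ), (∀ i, f (x i) = 0) → F f = 0 := by
    intro f hf
    apply hvanish
    intro y hy
    obtain ⟨i, rfl⟩ := hxsurj y hy
    exact hf i
  obtain ⟨G, hGstar, hG1, hG0, hGmul⟩ := aux_bump x hxinj
  set P : Fin k → (H →L[ℂ] H) := fun i => F (G i) with hP
  have hPne : ∀ i, P i ≠ 0 :=
    fun i => hne (G i) (x i) (hxmem i) (by rw [hG1 i]; exact one_ne_zero)
  refine ⟨k, claim k x hxinj hxmem, x, P, hxinj, hPne, ?_, ?_, ?_, ?_, ?_, ?_⟩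
  · intro i
    rw [IsSelfAdjoint, hP]
    dsimp only
    rw [← map_star, hGstar i]
  · intro i
    rw [IsIdempotentElem, hP]
    dsimp only
    rw [← map_mul]
    have hsub : F (G i * G i - G i) = 0 := by
      apply hker'
      intro j
      simp only [ContinuousMap.sub_apply, ContinuousMap.mul_apply]
      by_cases hji : i = j
      · subst hji; rw [hG1 i]; ring
      · rw [hG0 i j (Ne.symm (fun h => hji h.symm))]; ring
    rw [map_sub] at hsub
    exact sub_eq_zero.mp hsub
  · intro i
    exact Submodule.finiteDimensional_of_le (hrange (G i))
  · intro i j hij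
    rw [hP]
    dsimp only
    rw [← map_mul, hGmul i j hij, map_zero]
  · have := aux_finrank_sum k (fun i => LinearMap.range ((P i) : H →ₗ[ℂ] H)) V₁ hV₁fd
      (fun i => hrange (G i))
      (fun i j hij => horthQ (G i) (G j) (hGstar i) (hGmul i j hij))
    exact this.trans hV₁rank
  · intro f
    have hsub : F (f - ∑ j, f (x j) • G j) = 0 := by
      apply hker'
      intro l
      simp only [ContinuousMap.sub_apply, ContinuousMap.coe_sum, Finset.sum_apply,
        ContinuousMap.smul_apply, smul_eq_mul]
      rw [Finset.sum_eq_single l]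
      · rw [hG1 l]; ring
      · intro j _ hjl
        rw [hG0 j l hjl]; ring
      · intro hl; exact absurd (Finset.mem_univ l) hl
    rw [map_sub, sub_eq_zero] at hsub
    rw [hsub, map_sum]
    exact Finset.sum_congr rfl fun j _ => by rw [map_smul]
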